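/- Let V be a 5-dimensional vector space over a field k of characteristic zero, let ω be an alternating bilinear form on V whose radical has dimension 1 (i.e. ω has rank 4), and let V₄ ⊆ V be a 4-dimensional subspace on which ω restricts to a nondegenerate form. Let v ∈ V₄ be a nonzero vector, let v^⊥ = {u ∈ V : ω(v,u) = 0}, and let π : V → V/span(v) be the quotient map. Then v^⊥ is a 4-dimensional subspace containing v, and the assignment A ↦ π(A) defines a bijection from the set of 2-dimensional ω-isotropic subspaces A ⊆ V with A ∩ V₄ = span(v) onto the set of 1-dimensional subspaces L of V/span(v) with L ⊆ π(v^⊥) and L ⊄ π(v^⊥ ∩ V₄). -/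

import Mathlib

open Module

private lemma finrank_map_mkQ_add {k V : Type*} [Field k] [AddCommGroup V] [Module k V]
    [FiniteDimensional k V] (p A : Submodule k V) (h : p ≤ A) :
    finrank k (A.map p.mkQ) + finrank k p = finrank k A := by
  have h1 := LinearMap.finrank_range_add_finrank_ker ((p.mkQ).domRestrict A)
  have hrange : LinearMap.range ((p.mkQ).domRestrict A) = A.map p.mkQ :=
    LinearMap.range_domRestrict A p.mkQ
  have hker : LinearMap.ker ((p.mkQ).domRestrict A) = Submodule.comap A.subtype p := by
    ext x
    simp [LinearMap.mem_ker, Submodule.Quotient.mk_eq_zero]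
  rw [hrange, hker, (Submodule.comapSubtypeEquivOfLe h).finrank_eq] at h1
  simpa using h1

/-- Let `ω` be an alternating bilinear form of rank 4 (1-dimensional radical) on a
5-dimensional vector space over a field of characteristic zero, let `V₄` be a 4-dimensional
subspace on which `ω` restricts to a nondegenerate form, let `0 ≠ v ∈ V₄`, let
`v^⊥ = ker (ω v)`, and let `π : V → V / span v` be the quotient map. Then `v^⊥` is a
4-dimensional subspace containing `v`, and `A ↦ π(A)` is a bijection from the set of
2-dimensional `ω`-isotropic subspaces `A` of `V` with `A ∩ V₄ = span v` onto the set of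
1-dimensional subspaces `L` of `V / span v` with `L ⊆ π(v^⊥)` and `L ⊄ π(v^⊥ ∩ V₄)`. -/
theorem stmt4 {k V : Type*} [Field k] [CharZero k] [AddCommGroup V] [Module k V]
    [FiniteDimensional k V] (hV : finrank k V = 5)
    (ω : V →ₗ[k] V →ₗ[k] k) (halt : ∀ x : V, ω x x = 0)
    (hrad : finrank k (LinearMap.ker ω) = 1)
    (V₄ : Submodule k V) (hV₄ : finrank k V₄ = 4)
    (hnd : ∀ x ∈ V₄, (∀ y ∈ V₄, ω x y = 0) → x = 0)
    (v : V) (hv : v ≠ 0) (hvV₄ : v ∈ V₄) :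
    finrank k (LinearMap.ker (ω v)) = 4 ∧ v ∈ LinearMap.ker (ω v) ∧
    Set.BijOn (fun A : Submodule k V => A.map (Submodule.mkQ (k ∙ v)))
      {A : Submodule k V | finrank k A = 2 ∧ (∀ x ∈ A, ∀ y ∈ A, ω x y = 0) ∧
        A ⊓ V₄ = (k ∙ v)}
      {L : Submodule k (V ⧸ (k ∙ v)) | finrank k L = 1 ∧
        L ≤ (LinearMap.ker (ω v)).map (Submodule.mkQ (k ∙ v)) ∧
        ¬ L ≤ (LinearMap.ker (ω v) ⊓ V₄).map (Submodule.mkQ (k ∙ v))} := by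
  classical
  have hωv : ω v ≠ 0 := by
    intro h
    exact hv (hnd v hvV₄ (fun y _ => by simp [h]))
  have hskew : ∀ x y : V, ω x y = - ω y x := by
    intro x y
    have h := halt (x + y)
    simp only [map_add, LinearMap.add_apply, halt x, halt y] at h
    linear_combination h
  set p : Submodule k V := k ∙ v with hp
  have hvp : v ∈ p := Submodule.mem_span_singleton_self v
  have hfp : finrank k p = 1 := finrank_span_singleton hv
  set W := LinearMap.ker (ω v) with hW
  have hvW : v ∈ W := by simp [hW, LinearMap.mem_ker, halt]
  -- dimension of the kernel
  have hdim : finrank k (LinearMap.ker (ω v)) = 4 := by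
    rw [← hW]
    have h1 := LinearMap.finrank_range_add_finrank_ker (ω v)
    have hle : finrank k (LinearMap.range (ω v)) ≤ 1 := by
      simpa using Submodule.finrank_le (LinearMap.range (ω v))
    have hne : LinearMap.range (ω v) ≠ ⊥ := by
      exact fun h => hωv (LinearMap.range_eq_bot.1 h)
    have hne' : finrank k (LinearMap.range (ω v)) ≠ 0 := by
      rwa [ne_eq, Submodule.finrank_eq_zero]
    rw [hV, ← hW] at h1
    omega
  refine ⟨hdim, hvW, ?_, ?_, ?_⟩
  · -- MapsTo
    rintro A ⟨h2, hiso, hinf⟩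
    have hle : p ≤ A := hinf ▸ inf_le_left
    have hAW : A ≤ W := fun a ha => by
      simpa [hW, LinearMap.mem_ker] using hiso v (hle hvp) a ha
    have hd : finrank k (A.map p.mkQ) = 1 := by
      have := finrank_map_mkQ_add p A hle
      rw [hfp, h2] at this; omega
    refine ⟨hd, Submodule.map_mono hAW, ?_⟩
    intro hcon
    have hA1 : A ≤ Submodule.comap p.mkQ (A.map p.mkQ) := Submodule.le_comap_map _ _
    have hA2 : A ≤ W ⊓ V₄ := by
      refine le_trans (le_trans hA1 (Submodule.comap_mono hcon)) ?_
      rw [Submodule.comap_map_mkQ]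
      exact sup_le (Submodule.span_le.2 (by simp [Set.singleton_subset_iff, hvW, hvV₄])) le_rfl
    have : A = p := by
      rw [← hinf]
      exact le_antisymm (le_inf le_rfl (le_trans hA2 inf_le_right)) (hinf ▸ hle)
    rw [this, hfp] at h2
    omega
  · -- InjOn
    rintro A₁ ⟨_, _, hinf₁⟩ A₂ ⟨_, _, hinf₂⟩ heq
    have hle₁ : p ≤ A₁ := hinf₁ ▸ inf_le_left
    have hle₂ : p ≤ A₂ := hinf₂ ▸ inf_le_left
    have := congrArg (Submodule.comap p.mkQ) heq
    simpa [Submodule.comap_map_mkQ, sup_eq_right.2 hle₁, sup_eq_right.2 hle₂] using this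
  · -- SurjOn
    rintro L ⟨hL1, hL2, hL3⟩
    set A := Submodule.comap p.mkQ L with hA
    have hle : p ≤ A := by
      intro x hx
      simp only [hA, Submodule.mem_comap]
      rw [show p.mkQ x = 0 by rwa [← LinearMap.mem_ker, Submodule.ker_mkQ]]
      exact L.zero_mem
    have hmapA : A.map p.mkQ = L := by
      rw [hA, Submodule.map_comap_eq_of_surjective (Submodule.mkQ_surjective p)]
    have hAW : A ≤ W := by
      have : A ≤ Submodule.comap p.mkQ (W.map p.mkQ) :=
        hA ▸ Submodule.comap_mono hL2
      rw [Submodule.comap_map_mkQ] at this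
      exact le_trans this (sup_le (Submodule.span_le.2 (by simp [hvW])) le_rfl)
    have h2 : finrank k A = 2 := by
      have := finrank_map_mkQ_add p A hle
      rw [hmapA, hL1, hfp] at this; omega
    -- key: any element of L nonzero spans L
    have hspanL : ∀ x : V ⧸ p, x ∈ L → x ≠ 0 → L = k ∙ x := by
      intro x hx hx0
      refine (Submodule.eq_of_le_of_finrank_le ((Submodule.span_singleton_le_iff_mem x L).2 hx) ?_).symm
      rw [hL1, finrank_span_singleton hx0]
    -- pick a generator
    have hLne : L ≠ ⊥ := by
      intro h; rw [h] at hL1; simp at hL1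
    obtain ⟨xbar, hxL, hx0⟩ := Submodule.exists_mem_ne_zero_of_ne_bot hLne
    obtain ⟨u, rfl⟩ := Submodule.mkQ_surjective p xbar
    have huA : u ∈ A := by simpa [hA, Submodule.mem_comap] using hxL
    have hvu : ω v u = 0 := by simpa [hW, LinearMap.mem_ker] using hAW huA
    have huv : ω u v = 0 := by rw [hskew u v, hvu, neg_zero]
    -- A = span {v, u}
    have hApair : A ≤ Submodule.span k {v, u} := by
      intro a ha
      have hpa : p.mkQ a ∈ L := by simpa [hA, Submodule.mem_comap] using ha
      rw [hspanL _ hxL hx0, Submodule.mem_span_singleton] at hpa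
      obtain ⟨c, hc⟩ := hpa
      have : a - c • u ∈ p := by
        rw [← Submodule.ker_mkQ p, LinearMap.mem_ker, map_sub, map_smul, hc, sub_self]
      obtain ⟨d, hd⟩ := Submodule.mem_span_singleton.1 this
      have : a = d • v + c • u := by rw [hd]; abel
      rw [this]
      exact Submodule.add_mem _
        (Submodule.smul_mem _ _ (Submodule.subset_span (by simp)))
        (Submodule.smul_mem _ _ (Submodule.subset_span (by simp)))
    have hiso : ∀ x ∈ A, ∀ y ∈ A, ω x y = 0 := by
      intro x hx y hy
      obtain ⟨a, b, rfl⟩ := Submodule.mem_span_pair.1 (hApair hx)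
      obtain ⟨c, d, rfl⟩ := Submodule.mem_span_pair.1 (hApair hy)
      simp [map_add, map_smul, halt v, halt u, hvu, huv]
    have hinf : A ⊓ V₄ = p := by
      refine le_antisymm ?_ (le_inf hle (Submodule.span_le.2 (by simp [hvV₄])))
      · rintro a ⟨haA, haV₄⟩
        by_contra hap
        have hπa : p.mkQ a ≠ 0 := by
          rwa [ne_eq, ← LinearMap.mem_ker, Submodule.ker_mkQ]
        have hπaL : p.mkQ a ∈ L := by simpa [hA, Submodule.mem_comap] using haA
        apply hL3
        rw [hspanL _ hπaL hπa]
        rw [Submodule.span_singleton_le_iff_mem]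
        exact Submodule.mem_map_of_mem ⟨hAW haA, haV₄⟩
    exact ⟨A, ⟨h2, hiso, hinf⟩, hmapA⟩
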